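/- Let p/q be rational, A : ℝ/ℤ → SL(2,ℝ), A_s(x) = A(x + (s−1)p/q)···A(x) for s ≥ 1 with A_0 = id, l ∈ {0, 1}, and W_k(x) = ∑_{s=0}^{q−1} R_{ks/q} R_{ls/(2q)} A_s(x) for 0 ≤ k ≤ q−1. Then for every x ∈ ℝ/ℤ and every vector y ∈ ℝ², ∑_{k=0}^{q−1} ‖W_k(x)·y‖² = q ∑_{s=0}^{q−1} ‖A_s(x)·y‖². Consequently, for every x there exists a unit vector y ∈ ℝ² with ∑_{k=0}^{q−1} ‖W_k(x)·y‖² ≥ q². -/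

import Mathlib

open Real

noncomputable section

/-- The rotation matrix `R_θ ∈ SO(2,ℝ)`. -/
def RotR (θ : ℝ) : Matrix (Fin 2) (Fin 2) ℝ :=
  !![Real.cos (2 * π * θ), -Real.sin (2 * π * θ);
     Real.sin (2 * π * θ), Real.cos (2 * π * θ)]

/-- Iterates of the cocycle: `cocycleIterR α A s x = A(x+(s-1)α) ⋯ A(x)`, with `A_0 = id`. -/
def cocycleIterR (α : ℝ) (A : ℝ → Matrix (Fin 2) (Fin 2) ℝ) :
    ℕ → ℝ → Matrix (Fin 2) (Fin 2) ℝ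
  | 0 => fun _ => 1
  | s + 1 => fun x => A (x + (s : ℝ) * α) * cocycleIterR α A s x

/-- The discrete Fourier transform `W_k(x) = ∑_{s=0}^{q−1} R_{ks/q} R_{ls/(2q)} A_s(x)`. -/
def Wdft (p : ℤ) (q : ℕ) (l : ℕ) (A : ℝ → Matrix (Fin 2) (Fin 2) ℝ) (k : ℕ) (x : ℝ) :
    Matrix (Fin 2) (Fin 2) ℝ :=
  ∑ s ∈ Finset.range q,
    RotR (((k * s : ℕ) : ℝ) / (q : ℝ)) * RotR (((l * s : ℕ) : ℝ) / (2 * (q : ℝ))) *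
      cocycleIterR ((p : ℝ) / (q : ℝ)) A s x

/-- The squared Euclidean norm on `ℝ²`. -/
def sqNorm (v : Fin 2 → ℝ) : ℝ := v 0 ^ 2 + v 1 ^ 2

/-! ### Auxiliary lemmas -/

/-- Identify `ℝ²` with `ℂ`. -/
def toC (v : Fin 2 → ℝ) : ℂ := v 0 + v 1 * Complex.I

lemma sqNorm_eq (v : Fin 2 → ℝ) : sqNorm v = Complex.normSq (toC v) := by
  simp [sqNorm, toC, Complex.normSq_apply]; ring

lemma toC_rot (θ : ℝ) (v : Fin 2 → ℝ) :
    toC ((RotR θ).mulVec v) = Complex.exp ((2 * π * θ : ℝ) * Complex.I) * toC v := by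
  have hE : Complex.exp ((2 * π * θ : ℝ) * Complex.I)
      = (Real.cos (2 * π * θ) : ℂ) + (Real.sin (2 * π * θ) : ℂ) * Complex.I := by
    rw [Complex.exp_mul_I]
    norm_cast
  rw [hE]
  apply Complex.ext <;>
    simp [toC, RotR, Matrix.mulVec, dotProduct, Fin.sum_univ_two] <;> ring

lemma toC_sum (F : Finset ℕ) (f : ℕ → Fin 2 → ℝ) :
    toC (∑ s ∈ F, f s) = ∑ s ∈ F, toC (f s) := by
  simp [toC, Finset.sum_apply, Finset.sum_add_distrib, Finset.sum_mul]

lemma sum_mulVec (F : Finset ℕ) (f : ℕ → Matrix (Fin 2) (Fin 2) ℝ) (y : Fin 2 → ℝ) :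
    (∑ s ∈ F, f s).mulVec y = ∑ s ∈ F, (f s).mulVec y := by
  classical
  induction F using Finset.induction_on with
  | empty => simp
  | @insert a s h ih => rw [Finset.sum_insert h, Finset.sum_insert h, Matrix.add_mulVec, ih]

lemma dft_sum (q : ℕ) (hq : 0 < q) (s t : ℕ) (hs : s < q) (ht : t < q) :
    ∑ k ∈ Finset.range q,
      Complex.exp ((2 * π * ((s : ℝ) - t) / q : ℝ) * Complex.I) ^ k
      = if s = t then (q : ℂ) else 0 := by
  by_cases h : s = t
  · subst h; simp
  · simp only [h, if_false]
    set ζ := Complex.exp ((2 * π * ((s : ℝ) - t) / q : ℝ) * Complex.I) with hζ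
    have hqC : (q : ℂ) ≠ 0 := Nat.cast_ne_zero.2 hq.ne'
    have hζq : ζ ^ q = 1 := by
      rw [hζ, ← Complex.exp_nat_mul]
      have key : (q : ℂ) * (((2 * π * ((s : ℝ) - t) / q : ℝ) : ℂ) * Complex.I)
          = (((s : ℤ) - t : ℤ) : ℂ) * (2 * π * Complex.I) := by
        push_cast
        field_simp
      rw [key, Complex.exp_int_mul_two_pi_mul_I]
    have hζ1 : ζ ≠ 1 := by
      intro hone
      rw [hζ, Complex.exp_eq_one_iff] at hone
      obtain ⟨n, hn⟩ := hone
      have him : 2 * π * ((s : ℝ) - t) / q = n * (2 * π) := by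
        have := congrArg Complex.im hn
        simpa using this
      have hq0 : (q : ℝ) ≠ 0 := Nat.cast_ne_zero.2 hq.ne'
      have h' : 2 * π * ((s : ℝ) - t) = 2 * π * ((n : ℝ) * q) := by
        field_simp at him
        rw [him]; ring
      have hst : (s : ℝ) - t = (n : ℝ) * q :=
        mul_left_cancel₀ Real.two_pi_pos.ne' h'
      have hstz : (s : ℤ) - t = n * q := by exact_mod_cast hst
      have hqz : (0 : ℤ) < q := by exact_mod_cast hq
      rcases lt_trichotomy n 0 with hn0 | hn0 | hn0
      · have : n * (q : ℤ) ≤ -1 * q := mul_le_mul_of_nonneg_right (by omega) (by omega)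
        omega
      · simp [hn0] at hstz; omega
      · have : 1 * (q : ℤ) ≤ n * q := mul_le_mul_of_nonneg_right (by omega) (by omega)
        omega
    rw [geom_sum_eq hζ1, hζq]
    simp

lemma exp_mul_conj (q : ℕ) (k s t : ℕ) :
    Complex.exp ((2 * π * ((k * s : ℕ) : ℝ) / q : ℝ) * Complex.I) *
      (starRingEnd ℂ) (Complex.exp ((2 * π * ((k * t : ℕ) : ℝ) / q : ℝ) * Complex.I))
    = Complex.exp ((2 * π * ((s : ℝ) - t) / q : ℝ) * Complex.I) ^ k := by
  rw [← Complex.exp_conj, ← Complex.exp_add, ← Complex.exp_nat_mul]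
  congr 1
  rw [map_mul, Complex.conj_ofReal, Complex.conj_I]
  push_cast
  field_simp
  ring

lemma parseval_core (q : ℕ) (hq : 0 < q) (z : ℕ → ℂ) :
    ∑ k ∈ Finset.range q, Complex.normSq
        (∑ s ∈ Finset.range q,
          Complex.exp ((2 * π * ((k * s : ℕ) : ℝ) / q : ℝ) * Complex.I) * z s)
      = q * ∑ s ∈ Finset.range q, Complex.normSq (z s) := by
  have key : ∑ k ∈ Finset.range q,
      ((∑ s ∈ Finset.range q,
          Complex.exp ((2 * π * ((k * s : ℕ) : ℝ) / q : ℝ) * Complex.I) * z s) *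
        (starRingEnd ℂ) (∑ s ∈ Finset.range q,
          Complex.exp ((2 * π * ((k * s : ℕ) : ℝ) / q : ℝ) * Complex.I) * z s))
      = (q : ℂ) * ∑ s ∈ Finset.range q, z s * (starRingEnd ℂ) (z s) := by
    have step1 : ∀ k, (∑ s ∈ Finset.range q,
          Complex.exp ((2 * π * ((k * s : ℕ) : ℝ) / q : ℝ) * Complex.I) * z s) *
        (starRingEnd ℂ) (∑ t ∈ Finset.range q,
          Complex.exp ((2 * π * ((k * t : ℕ) : ℝ) / q : ℝ) * Complex.I) * z t)
        = ∑ s ∈ Finset.range q, ∑ t ∈ Finset.range q,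
            Complex.exp ((2 * π * ((s : ℝ) - t) / q : ℝ) * Complex.I) ^ k *
              (z s * (starRingEnd ℂ) (z t)) := by
      intro k
      rw [map_sum, Finset.sum_mul_sum]
      refine Finset.sum_congr rfl fun s _ => Finset.sum_congr rfl fun t _ => ?_
      rw [map_mul]
      rw [← exp_mul_conj q k s t]
      ring
    calc ∑ k ∈ Finset.range q, _ = ∑ k ∈ Finset.range q, ∑ s ∈ Finset.range q,
            ∑ t ∈ Finset.range q,
            Complex.exp ((2 * π * ((s : ℝ) - t) / q : ℝ) * Complex.I) ^ k *
              (z s * (starRingEnd ℂ) (z t)) := Finset.sum_congr rfl fun k _ => step1 k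
      _ = ∑ s ∈ Finset.range q, ∑ t ∈ Finset.range q,
            (∑ k ∈ Finset.range q,
              Complex.exp ((2 * π * ((s : ℝ) - t) / q : ℝ) * Complex.I) ^ k) *
              (z s * (starRingEnd ℂ) (z t)) := by
          rw [Finset.sum_comm]
          refine Finset.sum_congr rfl fun s _ => ?_
          rw [Finset.sum_comm]
          refine Finset.sum_congr rfl fun t _ => ?_
          rw [Finset.sum_mul]
      _ = ∑ s ∈ Finset.range q, ∑ t ∈ Finset.range q,
            (if s = t then (q : ℂ) else 0) * (z s * (starRingEnd ℂ) (z t)) := by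
          refine Finset.sum_congr rfl fun s hs => Finset.sum_congr rfl fun t ht => ?_
          rw [dft_sum q hq s t (Finset.mem_range.1 hs) (Finset.mem_range.1 ht)]
      _ = (q : ℂ) * ∑ s ∈ Finset.range q, z s * (starRingEnd ℂ) (z s) := by
          rw [Finset.mul_sum]
          refine Finset.sum_congr rfl fun s hs => ?_
          rw [Finset.sum_eq_single s]
          · simp
          · intro t _ hts; simp [Ne.symm hts]
          · intro hns; exact absurd hs hns
  simp only [Complex.mul_conj] at key
  exact_mod_cast key

lemma normSq_exp_mul (r : ℝ) (z : ℂ) :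
    Complex.normSq (Complex.exp ((r : ℂ) * Complex.I) * z) = Complex.normSq z := by
  rw [Complex.normSq_mul]
  have h1 : Complex.normSq (Complex.exp ((r : ℂ) * Complex.I)) = 1 := by
    rw [Complex.normSq_eq_norm_sq, Complex.norm_exp_ofReal_mul_I]
    norm_num
  rw [h1, one_mul]

lemma det_cocycle (α : ℝ) (A : ℝ → Matrix (Fin 2) (Fin 2) ℝ)
    (hdet : ∀ x : ℝ, (A x).det = 1) (s : ℕ) (x : ℝ) :
    (cocycleIterR α A s x).det = 1 := by
  induction s with
  | zero => simp [cocycleIterR]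
  | succ n ih => simp [cocycleIterR, Matrix.det_mul, hdet, ih]

lemma two_le_sq (M : Matrix (Fin 2) (Fin 2) ℝ) (h : M.det = 1) :
    2 ≤ sqNorm (M.mulVec ![1, 0]) + sqNorm (M.mulVec ![0, 1]) := by
  rw [Matrix.det_fin_two] at h
  simp [sqNorm, Matrix.mulVec, dotProduct, Fin.sum_univ_two]
  nlinarith [sq_nonneg (M 0 0 - M 1 1), sq_nonneg (M 0 1 + M 1 0)]

/-- **Parseval identity for the `W_k`, and its consequence:**
`∑_{k<q} ‖W_k(x)y‖² = q ∑_{s<q} ‖A_s(x)y‖²` for every `y ∈ ℝ²`, and hence for every `x`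
there is a unit vector `y` with `∑_{k<q} ‖W_k(x)y‖² ≥ q²`. -/
theorem Wdft_parseval (p : ℤ) (q : ℕ) (hq : 0 < q)
    (A : ℝ → Matrix (Fin 2) (Fin 2) ℝ)
    (hper : ∀ x : ℝ, A (x + 1) = A x) (hdet : ∀ x : ℝ, (A x).det = 1)
    (l : ℕ) (hl : l ≤ 1) (x : ℝ) :
    (∀ y : Fin 2 → ℝ,
      ∑ k ∈ Finset.range q, sqNorm ((Wdft p q l A k x).mulVec y) =
        (q : ℝ) * ∑ s ∈ Finset.range q,
          sqNorm ((cocycleIterR ((p : ℝ) / (q : ℝ)) A s x).mulVec y)) ∧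
    ∃ y : Fin 2 → ℝ, sqNorm y = 1 ∧
      (q : ℝ) ^ 2 ≤ ∑ k ∈ Finset.range q, sqNorm ((Wdft p q l A k x).mulVec y) := by
  set α := (p : ℝ) / (q : ℝ) with hα
  set B : ℕ → Matrix (Fin 2) (Fin 2) ℝ := fun s => cocycleIterR α A s x with hB
  have hP : ∀ y : Fin 2 → ℝ,
      ∑ k ∈ Finset.range q, sqNorm ((Wdft p q l A k x).mulVec y) =
        (q : ℝ) * ∑ s ∈ Finset.range q, sqNorm ((B s).mulVec y) := by
    intro y
    set z : ℕ → ℂ := fun s =>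
      toC ((RotR (((l * s : ℕ) : ℝ) / (2 * (q : ℝ)))).mulVec ((B s).mulVec y)) with hz
    have hW : ∀ k, sqNorm ((Wdft p q l A k x).mulVec y)
        = Complex.normSq (∑ s ∈ Finset.range q,
            Complex.exp ((2 * π * ((k * s : ℕ) : ℝ) / q : ℝ) * Complex.I) * z s) := by
      intro k
      rw [sqNorm_eq]
      congr 1
      rw [Wdft, sum_mulVec, toC_sum]
      refine Finset.sum_congr rfl fun s _ => ?_
      rw [mul_assoc, ← Matrix.mulVec_mulVec, ← Matrix.mulVec_mulVec, toC_rot]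
      have harg : (2 * π * (((k * s : ℕ) : ℝ) / (q : ℝ)) : ℝ)
          = 2 * π * ((k * s : ℕ) : ℝ) / (q : ℝ) := by ring
      rw [harg]
    have hzn : ∀ s, Complex.normSq (z s) = sqNorm ((B s).mulVec y) := by
      intro s
      rw [hz]
      simp only
      rw [toC_rot, normSq_exp_mul, ← sqNorm_eq]
    calc ∑ k ∈ Finset.range q, sqNorm ((Wdft p q l A k x).mulVec y)
        = ∑ k ∈ Finset.range q, Complex.normSq (∑ s ∈ Finset.range q,
            Complex.exp ((2 * π * ((k * s : ℕ) : ℝ) / q : ℝ) * Complex.I) * z s) :=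
          Finset.sum_congr rfl fun k _ => hW k
      _ = (q : ℝ) * ∑ s ∈ Finset.range q, Complex.normSq (z s) := parseval_core q hq z
      _ = (q : ℝ) * ∑ s ∈ Finset.range q, sqNorm ((B s).mulVec y) := by
          rw [Finset.sum_congr rfl fun s _ => hzn s]
  refine ⟨hP, ?_⟩
  have hdB : ∀ s, (B s).det = 1 := fun s => det_cocycle α A hdet s x
  set S0 := ∑ s ∈ Finset.range q, sqNorm ((B s).mulVec ![1, 0]) with hS0
  set S1 := ∑ s ∈ Finset.range q, sqNorm ((B s).mulVec ![0, 1]) with hS1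
  have h2q : 2 * (q : ℝ) ≤ S0 + S1 := by
    rw [hS0, hS1, ← Finset.sum_add_distrib]
    calc 2 * (q : ℝ) = ∑ _s ∈ Finset.range q, (2 : ℝ) := by
          simp [mul_comm]
      _ ≤ _ := Finset.sum_le_sum fun s _ => two_le_sq _ (hdB s)
  have hqpos : (0 : ℝ) < q := Nat.cast_pos.2 hq
  by_cases hc : (q : ℝ) ≤ S0
  · refine ⟨![1, 0], by norm_num [sqNorm], ?_⟩
    rw [hP]
    calc (q : ℝ) ^ 2 = q * q := sq (q : ℝ)
      _ ≤ q * S0 := mul_le_mul_of_nonneg_left hc hqpos.le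
  · refine ⟨![0, 1], by norm_num [sqNorm], ?_⟩
    rw [hP]
    have hc1 : (q : ℝ) ≤ S1 := by linarith
    calc (q : ℝ) ^ 2 = q * q := sq (q : ℝ)
      _ ≤ q * S1 := mul_le_mul_of_nonneg_left hc1 hqpos.le
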